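/- arXiv:2504.14328 — 4 statements merged into one kernel-verified Lean document; each statement's English description precedes it below -/
import Mathlib

section
/- For every finite simple graph G on n vertices in which every vertex has degree at least δ (with δ a natural number), there exists a dominating set S of G with |S| ≤ n·(1 + ln(1+δ))/(1+δ). -/
open Finset

lemma logR1 (a u u' : ℝ) (ha : 1 ≤ a) (hau : a < u) (hu'0 : 0 ≤ u')
    (hu'a : u' ≤ a) (hmix : a * u' ≤ u * (a - 1)) :
    1 + u' ≤ a + a * Real.log (u / a) := by
  have ha0 : (0:ℝ) < a := by linarith
  have hu0 : (0:ℝ) < u := by linarith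
  have hlb : Real.log (a / u) ≤ a / u - 1 := Real.log_le_sub_one_of_pos (by positivity)
  have hneg : Real.log (a / u) = - Real.log (u / a) := by
    rw [← Real.log_inv, inv_div]
  rw [hneg] at hlb
  have hlb' : u - a ≤ u * Real.log (u / a) := by
    have h := mul_le_mul_of_nonneg_left hlb hu0.le
    have e : u * (a / u - 1) = a - u := by field_simp
    nlinarith [h]
  by_cases h2 : u * (a - 1) ≤ a ^ 2
  · have h3 : (0:ℝ) ≤ (u - a) * (a ^ 2 - u * (a - 1)) :=
      mul_nonneg (by linarith) (by linarith)
    nlinarith [mul_le_mul_of_nonneg_left hlb' (mul_pos ha0 ha0).le, mul_pos ha0 hu0]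
  · push_neg at h2
    have ha1 : 1 < a := by nlinarith
    have h7 : Real.log ((a - 1) / a) ≤ (a - 1) / a - 1 :=
      Real.log_le_sub_one_of_pos (div_pos (by linarith) ha0)
    have h8 : Real.log ((a - 1) / a) = - Real.log (a / (a - 1)) := by
      rw [← Real.log_inv, inv_div]
    have h9 : (a - 1) / a - 1 = -(1 / a) := by field_simp; ring
    have h10 : 1 / a ≤ Real.log (a / (a - 1)) := by rw [h8, h9] at h7; linarith
    have h11 : a / (a - 1) ≤ u / a := by
      rw [div_le_div_iff₀ (by linarith) ha0]; nlinarith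
    have h12 : Real.log (a / (a - 1)) ≤ Real.log (u / a) :=
      Real.log_le_log (div_pos (by linarith) (by linarith)) h11
    have h13 : 1 ≤ a * Real.log (u / a) := by
      calc (1:ℝ) = a * (1 / a) := by field_simp
      _ ≤ a * Real.log (u / a) := by
          apply mul_le_mul_of_nonneg_left _ ha0.le; linarith
    linarith

lemma logR2 (a u u' : ℝ) (ha : 1 ≤ a) (h1 : a < u') (h2 : u' < u)
    (h3 : u ≤ a * (u - u')) :
    1 + (a + a * Real.log (u' / a)) ≤ a + a * Real.log (u / a) := by
  have ha0 : (0:ℝ) < a := by linarith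
  have hu'0 : (0:ℝ) < u' := by linarith
  have hu0 : (0:ℝ) < u := by linarith
  have h4 : Real.log (u' / u) ≤ u' / u - 1 := Real.log_le_sub_one_of_pos (by positivity)
  have e1 : Real.log (u / a) = Real.log u - Real.log a := Real.log_div hu0.ne' ha0.ne'
  have e2 : Real.log (u' / a) = Real.log u' - Real.log a := Real.log_div hu'0.ne' ha0.ne'
  have e3 : Real.log (u' / u) = Real.log u' - Real.log u := Real.log_div hu'0.ne' hu0.ne'
  have h6 : 1 ≤ a * (1 - u' / u) := by
    have e : a * (1 - u' / u) = (a * u - a * u') / u := by field_simp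
    rw [e, le_div_iff₀ hu0]; nlinarith
  have h5 := mul_le_mul_of_nonneg_left h4 ha0.le
  rw [e3] at h5
  rw [e1, e2]
  nlinarith [h5, h6]

/-- A dominating set of a simple graph: every vertex is in `S` or adjacent to a vertex of `S`. -/
def SimpleGraph.IsDominatingSet {V : Type*} (G : SimpleGraph V) (S : Finset V) : Prop :=
  ∀ v : V, v ∈ S ∨ ∃ u ∈ S, G.Adj u v

/-- Every finite simple graph on `n` vertices with minimum degree at least `δ` has a
dominating set of size at most `n·(1 + ln(1+δ))/(1+δ)`. -/
theorem exists_dominatingSet_card_le_log_bound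
    {V : Type*} [Fintype V] [DecidableEq V] (G : SimpleGraph V) [DecidableRel G.Adj]
    (δ : ℕ) (hδ : ∀ v : V, δ ≤ G.degree v) :
    ∃ S : Finset V, G.IsDominatingSet S ∧
      (S.card : ℝ) ≤ (Fintype.card V : ℝ) * (1 + Real.log (1 + (δ : ℝ))) / (1 + (δ : ℝ)) := by
  classical
  by_cases hV : IsEmpty V
  · refine ⟨∅, fun v => (hV.false v).elim, ?_⟩
    haveI := hV
    simp
  · rw [not_isEmpty_iff] at hV
    set n := Fintype.card V with hn_def
    set d := δ + 1 with hd_def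
    have hn0 : 0 < n := Fintype.card_pos
    have hdn : d ≤ n := by
      obtain ⟨v⟩ := hV
      have h1 := hδ v
      have h2 := G.degree_lt_card_verts v
      omega
    set a : ℝ := (n : ℝ) / (d : ℝ) with ha_def
    have hd0 : (0:ℝ) < (d:ℝ) := by positivity
    have ha0 : (0:ℝ) < a := by positivity
    have ha1 : 1 ≤ a := by
      rw [ha_def, le_div_iff₀ hd0]
      simpa using (by exact_mod_cast hdn : (d:ℝ) ≤ (n:ℝ))
    have cnt_eq : ∀ u : V, (univ.filter (fun v => u = v ∨ G.Adj v u)).card = G.degree u + 1 := by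
      intro u
      have h : univ.filter (fun v => u = v ∨ G.Adj v u) = insert u (G.neighborFinset u) := by
        ext v
        simp [SimpleGraph.mem_neighborFinset, eq_comm, G.adj_comm]
      rw [h, card_insert_of_notMem (by simp), SimpleGraph.card_neighborFinset_eq_degree]
    have avg : ∀ U : Finset V, U.Nonempty →
        ∃ v : V, d * U.card ≤ n * (U.filter (fun u => u = v ∨ G.Adj v u)).card := by
      intro U _
      have hswap : ∑ v ∈ univ, (U.filter (fun u => u = v ∨ G.Adj v u)).card
          = ∑ u ∈ U, (univ.filter (fun v => u = v ∨ G.Adj v u)).card := by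
        simp only [card_filter]
        rw [Finset.sum_comm]
      have hlow : d * U.card ≤ ∑ v ∈ univ, (U.filter (fun u => u = v ∨ G.Adj v u)).card := by
        rw [hswap]
        calc d * U.card = ∑ _u ∈ U, d := by rw [Finset.sum_const, smul_eq_mul, mul_comm]
        _ ≤ ∑ u ∈ U, (univ.filter (fun v => u = v ∨ G.Adj v u)).card := by
            apply Finset.sum_le_sum
            intro u _
            rw [cnt_eq u]
            have := hδ u
            omega
      have havg : ∃ v ∈ univ, d * U.card ≤ n * (U.filter (fun u => u = v ∨ G.Adj v u)).card := by
        apply Finset.exists_le_of_sum_le univ_nonempty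
        calc ∑ _v ∈ univ, d * U.card = n * (d * U.card) := by
              rw [Finset.sum_const, smul_eq_mul, Finset.card_univ]
        _ ≤ n * ∑ v ∈ univ, (U.filter (fun u => u = v ∨ G.Adj v u)).card :=
              Nat.mul_le_mul_left _ hlow
        _ = ∑ v ∈ univ, n * (U.filter (fun u => u = v ∨ G.Adj v u)).card := by
              rw [Finset.mul_sum]
      obtain ⟨v, _, hv⟩ := havg
      exact ⟨v, hv⟩
    have key : ∀ U : Finset V, ∃ S : Finset V,
        (∀ u ∈ U, u ∈ S ∨ ∃ w ∈ S, G.Adj w u) ∧ S.card ≤ U.card ∧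
        (S.card : ℝ) ≤ a + a * Real.log (max 1 ((U.card : ℝ) / a)) := by
      intro U
      induction U using Finset.strongInduction with
      | _ U IH =>
        by_cases hUa : (U.card : ℝ) ≤ a
        · refine ⟨U, fun u hu => Or.inl hu, le_refl _, ?_⟩
          have h1 : (0:ℝ) ≤ Real.log (max 1 ((U.card : ℝ) / a)) :=
            Real.log_nonneg (le_max_left _ _)
          nlinarith
        · push_neg at hUa
          have hUne : U.Nonempty := by
            rw [← card_pos]
            by_contra h
            push_neg at h
            interval_cases hc : U.card
            · simp [hc] at hUa; linarith
          obtain ⟨v, hv⟩ := avg U hUne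
          set C := U.filter (fun u => u = v ∨ G.Adj v u) with hC_def
          have hCU : C ⊆ U := filter_subset _ _
          have hCne : C.Nonempty := by
            rw [← card_pos]
            rcases Nat.eq_zero_or_pos C.card with h | h
            · exfalso
              rw [h, Nat.mul_zero] at hv
              have : 0 < d * U.card := Nat.mul_pos (by omega) hUne.card_pos
              omega
            · exact h
          have hssub : U \ C ⊂ U := by
            apply Finset.sdiff_ssubset hCU hCne
          obtain ⟨S', hS'dom, hS'card, hS'bound⟩ := IH (U \ C) hssub
          have hcard_sdiff : (U \ C).card = U.card - C.card := card_sdiff_of_subset hCU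
          have hCle : C.card ≤ U.card := card_le_card hCU
          have hNat : n * (U \ C).card + d * U.card ≤ n * U.card := by
            have heq : n * (U.card - C.card) + n * C.card = n * U.card := by
              rw [← Nat.mul_add, Nat.sub_add_cancel hCle]
            calc n * (U \ C).card + d * U.card
                ≤ n * (U.card - C.card) + n * C.card := by
                  rw [hcard_sdiff]; exact Nat.add_le_add_left hv _
              _ = n * U.card := heq
          have hRe : a * ((U \ C).card : ℝ) + (U.card : ℝ) ≤ a * (U.card : ℝ) := by
            have hcast : (n : ℝ) * ((U \ C).card : ℝ) + (d : ℝ) * (U.card : ℝ)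
                ≤ (n : ℝ) * (U.card : ℝ) := by exact_mod_cast hNat
            rw [ha_def]
            rw [div_mul_eq_mul_div, div_mul_eq_mul_div, ← sub_nonneg]
            have : (n:ℝ) * ↑U.card / ↑d - ((n:ℝ) * ↑(U \ C).card / ↑d + ↑U.card)
                = ((n:ℝ) * ↑U.card - ((n:ℝ) * ↑(U \ C).card + (d:ℝ) * ↑U.card)) / ↑d := by
              field_simp
            rw [this]
            apply div_nonneg _ hd0.le
            linarith
          have hmaxU : max 1 ((U.card : ℝ) / a) = (U.card : ℝ) / a := by
            apply max_eq_right
            rw [le_div_iff₀ ha0]; linarith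
          refine ⟨insert v S', ?_, ?_, ?_⟩
          · intro u hu
            by_cases hu' : u = v ∨ G.Adj v u
            · rcases hu' with h | h
              · exact Or.inl (h ▸ mem_insert_self v S')
              · exact Or.inr ⟨v, mem_insert_self v S', h⟩
            · have hmem : u ∈ U \ C := mem_sdiff.2 ⟨hu, by simp [hC_def, hu']⟩
              rcases hS'dom u hmem with h | ⟨w, hw, hadj⟩
              · exact Or.inl (mem_insert_of_mem h)
              · exact Or.inr ⟨w, mem_insert_of_mem hw, hadj⟩
          · have h1 : (insert v S').card ≤ S'.card + 1 := card_insert_le _ _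
            have := hCne.card_pos
            omega
          · have h1 : ((insert v S').card : ℝ) ≤ (S'.card : ℝ) + 1 := by
              exact_mod_cast card_insert_le v S'
            rw [hmaxU]
            by_cases hsplit : ((U \ C).card : ℝ) ≤ a
            · have h2 : (S'.card : ℝ) ≤ ((U \ C).card : ℝ) := by exact_mod_cast hS'card
              have h3 := logR1 a (U.card : ℝ) ((U \ C).card : ℝ) ha1 hUa
                (by positivity) hsplit (by nlinarith)
              linarith
            · push_neg at hsplit
              have hmaxU' : max 1 (((U \ C).card : ℝ) / a) = ((U \ C).card : ℝ) / a := by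
                apply max_eq_right
                rw [le_div_iff₀ ha0]; linarith
              rw [hmaxU'] at hS'bound
              have hlt : ((U \ C).card : ℝ) < (U.card : ℝ) := by
                exact_mod_cast card_lt_card hssub
              have h3 := logR2 a (U.card : ℝ) ((U \ C).card : ℝ) ha1 hsplit hlt
                (by nlinarith)
              linarith
    obtain ⟨S, hdom, _, hbound⟩ := key univ
    refine ⟨S, fun v => hdom v (mem_univ v), ?_⟩
    have hna : ((Finset.univ : Finset V).card : ℝ) / a = (d : ℝ) := by
      rw [Finset.card_univ, ← hn_def, ha_def]
      field_simp
    rw [hna] at hbound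
    have hd1 : (1:ℝ) ≤ (d:ℝ) := by exact_mod_cast (by omega : 1 ≤ d)
    rw [max_eq_right hd1] at hbound
    have hlogd : Real.log (d : ℝ) = Real.log (1 + (δ : ℝ)) := by
      congr 1
      push_cast [hd_def]
      ring
    have hfin : a + a * Real.log (d:ℝ) = (n : ℝ) * (1 + Real.log (1 + (δ:ℝ))) / (1 + (δ:ℝ)) := by
      rw [hlogd, ha_def]
      have : ((d:ℕ):ℝ) = 1 + (δ:ℝ) := by push_cast [hd_def]; ring
      rw [this]
      field_simp
    linarith [hbound, hfin.le, hfin.ge]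
end

section
/- For every finite simple graph G on n vertices in which every vertex has degree at least δ (with δ a natural number), and for every real number p with 0 ≤ p ≤ 1, there exists a dominating set S of G with |S| ≤ n·(p + (1−p)^(δ+1)). -/
open Finset

private lemma dom_sum_w_one {V : Type*} [DecidableEq V] (p : ℝ) (s : Finset V) :
    ∑ X ∈ s.powerset, p ^ X.card * (1 - p) ^ (s \ X).card = 1 := by
  have h := Finset.prod_add (fun _ : V => p) (fun _ : V => 1 - p) s
  simp only [Finset.prod_const] at h
  rw [← h]
  simp

private lemma dom_sum_w_disjoint {V : Type*} [Fintype V] [DecidableEq V] (p : ℝ) (A : Finset V) :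
    ∑ X ∈ (univ : Finset V).powerset.filter (fun X => Disjoint X A),
      p ^ X.card * (1 - p) ^ ((univ : Finset V) \ X).card = (1 - p) ^ A.card := by
  have hset : (univ : Finset V).powerset.filter (fun X => Disjoint X A)
      = ((univ : Finset V) \ A).powerset := by
    ext X; simp [Finset.subset_sdiff]
  rw [hset]
  have key : ∀ X ∈ ((univ : Finset V) \ A).powerset,
      p ^ X.card * (1 - p) ^ ((univ : Finset V) \ X).card
      = (1 - p) ^ A.card * (p ^ X.card * (1 - p) ^ (((univ : Finset V) \ A) \ X).card) := by
    intro X hX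
    rw [Finset.mem_powerset] at hX
    have hXA : Disjoint X A := (Finset.subset_sdiff.mp hX).2
    have c1 : ((univ : Finset V) \ X).card = Fintype.card V - X.card := by
      rw [Finset.card_sdiff_of_subset (Finset.subset_univ X), Finset.card_univ]
    have c2 : (((univ : Finset V) \ A) \ X).card = Fintype.card V - A.card - X.card := by
      rw [Finset.card_sdiff_of_subset hX, Finset.card_sdiff_of_subset (Finset.subset_univ A), Finset.card_univ]
    have c3 : X.card + A.card ≤ Fintype.card V := by
      rw [← Finset.card_union_of_disjoint hXA, ← Finset.card_univ]
      exact Finset.card_le_card (Finset.subset_univ _)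
    have c4 : ((univ : Finset V) \ X).card = A.card + (((univ : Finset V) \ A) \ X).card := by
      omega
    rw [c4, pow_add]; ring
  rw [Finset.sum_congr rfl key, ← Finset.mul_sum, dom_sum_w_one, mul_one]

/-- Probabilistic bound: a graph on `n` vertices with minimum degree at least `δ` has, for each
`0 ≤ p ≤ 1`, a dominating set of size at most `n·(p + (1−p)^(δ+1))`. -/
theorem exists_dominatingSet_card_le_prob_bound
    {V : Type*} [Fintype V] [DecidableEq V] (G : SimpleGraph V) [DecidableRel G.Adj]
    (δ : ℕ) (hδ : ∀ v : V, δ ≤ G.degree v)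
    (p : ℝ) (hp0 : 0 ≤ p) (hp1 : p ≤ 1) :
    ∃ S : Finset V, G.IsDominatingSet S ∧
      (S.card : ℝ) ≤ (Fintype.card V : ℝ) * (p + (1 - p) ^ (δ + 1)) := by
  classical
  set n : ℝ := (Fintype.card V : ℝ) with hn
  have hq0 : (0:ℝ) ≤ 1 - p := by linarith
  have hq1 : (1:ℝ) - p ≤ 1 := by linarith
  set w : Finset V → ℝ := fun X => p ^ X.card * (1 - p) ^ ((univ : Finset V) \ X).card with hw
  have hwnn : ∀ X : Finset V, 0 ≤ w X := fun X =>
    mul_nonneg (pow_nonneg hp0 _) (pow_nonneg hq0 _)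
  -- closed neighborhood
  set Nc : V → Finset V := fun v => insert v (G.neighborFinset v) with hNc
  set U : Finset V → Finset V := fun X => univ.filter (fun v => Disjoint X (Nc v)) with hU
  set f : Finset V → ℝ := fun X => (X.card : ℝ) + ((U X).card : ℝ) with hf
  -- card of closed neighborhood
  have hNcard : ∀ v : V, (Nc v).card = G.degree v + 1 := by
    intro v
    rw [hNc]
    simp only
    rw [Finset.card_insert_of_notMem (by simp), SimpleGraph.card_neighborFinset_eq_degree]
  -- expectation bound
  have hsum_le : ∑ X ∈ (univ : Finset V).powerset, w X * f X ≤ n * (p + (1 - p) ^ (δ + 1)) := by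
    have hcardX : ∀ X : Finset V, (X.card : ℝ) = ∑ v ∈ (univ : Finset V),
        (if v ∈ X then (1:ℝ) else 0) := by
      intro X
      rw [Finset.sum_ite_mem, Finset.univ_inter, Finset.sum_const, nsmul_eq_mul]
      try rw [mul_one]
    have hcardU : ∀ X : Finset V, ((U X).card : ℝ) = ∑ v ∈ (univ : Finset V),
        (if Disjoint X (Nc v) then (1:ℝ) else 0) := by
      intro X
      rw [Finset.sum_boole]
      try rfl
    have step1 : ∑ X ∈ (univ : Finset V).powerset, w X * f X
        = ∑ v ∈ (univ : Finset V), ∑ X ∈ (univ : Finset V).powerset,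
            ((if v ∈ X then w X else 0) + (if Disjoint X (Nc v) then w X else 0)) := by
      rw [Finset.sum_comm]
      refine Finset.sum_congr rfl fun X _ => ?_
      rw [hf]
      simp only
      rw [hcardX X, hcardU X, ← Finset.sum_add_distrib, Finset.mul_sum]
      refine Finset.sum_congr rfl fun v _ => ?_
      by_cases h1 : v ∈ X <;> by_cases h2 : Disjoint X (Nc v) <;> simp [h1, h2] <;> ring
    rw [step1]
    have inner : ∀ v : V, ∑ X ∈ (univ : Finset V).powerset,
        ((if v ∈ X then w X else 0) + (if Disjoint X (Nc v) then w X else 0))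
        ≤ p + (1 - p) ^ (δ + 1) := by
      intro v
      rw [Finset.sum_add_distrib]
      have t1 : ∑ X ∈ (univ : Finset V).powerset, (if v ∈ X then w X else 0) = p := by
        rw [Finset.sum_ite, Finset.sum_const, Finset.sum_filter]
        simp only [smul_zero, add_zero]
        rw [← Finset.sum_filter]
        have hsplit := Finset.sum_filter_add_sum_filter_not (univ : Finset V).powerset
          (fun X => v ∈ X) w
        have htot : ∑ X ∈ (univ : Finset V).powerset, w X = 1 := dom_sum_w_one p univ
        have hnot : ∑ X ∈ (univ : Finset V).powerset.filter (fun X => ¬ v ∈ X), w X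
            = 1 - p := by
          have hcong : (univ : Finset V).powerset.filter (fun X => ¬ v ∈ X)
              = (univ : Finset V).powerset.filter (fun X => Disjoint X ({v} : Finset V)) := by
            apply Finset.filter_congr
            intro X _
            simp [Finset.disjoint_singleton_right]
          rw [hcong]
          have := dom_sum_w_disjoint (V := V) p ({v} : Finset V)
          simpa using this
        rw [htot, hnot] at hsplit
        linarith
      have t2 : ∑ X ∈ (univ : Finset V).powerset, (if Disjoint X (Nc v) then w X else 0)
          = (1 - p) ^ (Nc v).card := by
        rw [Finset.sum_ite, Finset.sum_const, Finset.sum_filter]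
        simp only [smul_zero, add_zero]
        rw [← Finset.sum_filter]
        exact dom_sum_w_disjoint p (Nc v)
      rw [t1, t2]
      have hdeg : δ + 1 ≤ (Nc v).card := by
        rw [hNcard v]; have := hδ v; omega
      have := pow_le_pow_of_le_one hq0 hq1 hdeg
      linarith
    calc ∑ v ∈ (univ : Finset V), ∑ X ∈ (univ : Finset V).powerset,
          ((if v ∈ X then w X else 0) + (if Disjoint X (Nc v) then w X else 0))
        ≤ ∑ _v ∈ (univ : Finset V), (p + (1 - p) ^ (δ + 1)) :=
          Finset.sum_le_sum fun v _ => inner v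
      _ = n * (p + (1 - p) ^ (δ + 1)) := by
          rw [Finset.sum_const, nsmul_eq_mul, Finset.card_univ, hn]
  -- pick a minimizer
  obtain ⟨X₀, hX₀mem, hmin⟩ := Finset.exists_min_image (univ : Finset V).powerset f
    ⟨∅, Finset.mem_powerset.mpr (Finset.empty_subset _)⟩
  have hfX₀ : f X₀ ≤ n * (p + (1 - p) ^ (δ + 1)) := by
    have h1 : f X₀ = ∑ X ∈ (univ : Finset V).powerset, w X * f X₀ := by
      rw [← Finset.sum_mul, dom_sum_w_one, one_mul]
    have h2 : ∑ X ∈ (univ : Finset V).powerset, w X * f X₀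
        ≤ ∑ X ∈ (univ : Finset V).powerset, w X * f X :=
      Finset.sum_le_sum fun X hX => mul_le_mul_of_nonneg_left (hmin X hX) (hwnn X)
    linarith
  refine ⟨X₀ ∪ U X₀, ?_, ?_⟩
  · intro v
    by_cases h : Disjoint X₀ (Nc v)
    · left
      apply Finset.mem_union_right
      rw [hU]
      simp only [Finset.mem_filter, Finset.mem_univ, true_and]
      exact h
    · obtain ⟨u, huX, huN⟩ := Finset.not_disjoint_iff.mp h
      rw [hNc] at huN
      simp only [Finset.mem_insert] at huN
      rcases huN with rfl | huN
      · left; exact Finset.mem_union_left _ huX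
      · right
        exact ⟨u, Finset.mem_union_left _ huX,
          (G.mem_neighborFinset v u).mp huN |>.symm⟩
  · calc ((X₀ ∪ U X₀).card : ℝ) ≤ ((X₀.card + (U X₀).card : ℕ) : ℝ) := by
          exact_mod_cast Finset.card_union_le _ _
      _ = f X₀ := by rw [hf]; push_cast; ring
      _ ≤ n * (p + (1 - p) ^ (δ + 1)) := hfX₀
end

section
/- Let G be a finite simple graph, let D be a nonempty dominating set of G, let U be a subset of the vertices of G, and let v be a vertex maximizing |N[v] ∩ U| over all vertices of G. Then |U \ N[v]| ≤ |U| · (1 − 1/|D|) (as real numbers). -/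
/-- One-step progress bound for the greedy algorithm: if `v` maximizes the span `|N[v] ∩ U|`,
then the uncovered set shrinks by a factor `(1 − 1/|D|)` for any nonempty dominating set `D`. -/
theorem greedy_step_uncovered_le
    {V : Type*} [Fintype V] [DecidableEq V] (G : SimpleGraph V) [DecidableRel G.Adj]
    (D : Finset V) (hD : G.IsDominatingSet D) (hDne : D.Nonempty)
    (U : Finset V) (v : V)
    (hmax : ∀ w : V, (((insert w (G.neighborFinset w)) ∩ U).card : ℕ) ≤
      ((insert v (G.neighborFinset v)) ∩ U).card) :
    ((U \ (insert v (G.neighborFinset v))).card : ℝ) ≤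
      (U.card : ℝ) * (1 - 1 / (D.card : ℝ)) := by
  set s := ((insert v (G.neighborFinset v)) ∩ U).card with hs
  have hsub : U ⊆ D.biUnion (fun d => (insert d (G.neighborFinset d)) ∩ U) := by
    intro u hu
    rcases hD u with h | ⟨d, hd, hadj⟩
    · exact Finset.mem_biUnion.2 ⟨u, h, Finset.mem_inter.2 ⟨Finset.mem_insert_self _ _, hu⟩⟩
    · exact Finset.mem_biUnion.2 ⟨d, hd, Finset.mem_inter.2
        ⟨Finset.mem_insert_of_mem ((G.mem_neighborFinset d u).2 hadj), hu⟩⟩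
  have hUle : U.card ≤ D.card * s := by
    calc U.card ≤ (D.biUnion (fun d => (insert d (G.neighborFinset d)) ∩ U)).card :=
          Finset.card_le_card hsub
      _ ≤ ∑ d ∈ D, ((insert d (G.neighborFinset d)) ∩ U).card := Finset.card_biUnion_le
      _ ≤ ∑ _d ∈ D, s := Finset.sum_le_sum fun d _ => hmax d
      _ = D.card * s := by rw [Finset.sum_const, smul_eq_mul]
  have hcard : (U \ (insert v (G.neighborFinset v))).card = U.card - s := by
    rw [hs, Finset.inter_comm, ← Finset.card_sdiff_add_card_inter U (insert v (G.neighborFinset v))]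
    omega
  have hsle : s ≤ U.card := by
    rw [hs, Finset.inter_comm]
    exact Finset.card_le_card (Finset.inter_subset_left)
  have hDpos : (0 : ℝ) < D.card := by exact_mod_cast Finset.card_pos.2 hDne
  rw [hcard]
  have h1 : ((U.card - s : ℕ) : ℝ) = (U.card : ℝ) - s := by
    push_cast [hsle]; ring
  rw [h1, mul_sub, mul_one]
  have h2 : (U.card : ℝ) ≤ (D.card : ℝ) * s := by exact_mod_cast hUle
  have h3 : (U.card : ℝ) * (1 / D.card) ≤ s := by
    rw [mul_one_div, div_le_iff₀ hDpos]
    linarith [h2]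
  linarith
end

section
/- Let G be a finite simple graph on n ≥ 1 vertices with maximum degree Δ, and suppose D* is a nonempty dominating set of G of minimum cardinality γ. Let v₁, …, v_k be a sequence of vertices built greedily: setting U₀ = V and U_i = U_{i−1} \ N[v_i], each v_i maximizes |N[v] ∩ U_{i−1}| over all vertices v of G, each |N[v_i] ∩ U_{i−1}| ≥ 1, and U_k = ∅. Then k ≤ γ · (1 + ln(Δ + 1)). -/
/-- The greedy algorithm computes a `(1 + ln(Δ+1))`-approximation of the
minimum dominating set. -/
theorem greedy_approx_dominatingSet
    {V : Type*} [Fintype V] [DecidableEq V] (G : SimpleGraph V) [DecidableRel G.Adj]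
    (hn : 1 ≤ Fintype.card V)
    (Δ : ℕ) (hΔ : ∀ w : V, G.degree w ≤ Δ)
    (Dstar : Finset V) (hdom : G.IsDominatingSet Dstar) (hne : Dstar.Nonempty)
    (hmin : ∀ D' : Finset V, G.IsDominatingSet D' → Dstar.card ≤ D'.card)
    (k : ℕ) (v : ℕ → V) (U : ℕ → Finset V)
    (hU0 : U 0 = Finset.univ)
    (hUsucc : ∀ i < k, U (i + 1) = U i \ (insert (v i) (G.neighborFinset (v i))))
    (hmax : ∀ i < k, ∀ w : V, ((insert w (G.neighborFinset w)) ∩ U i).card ≤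
      ((insert (v i) (G.neighborFinset (v i))) ∩ U i).card)
    (hpos : ∀ i < k, 1 ≤ ((insert (v i) (G.neighborFinset (v i))) ∩ U i).card)
    (hUk : U k = ∅) :
    (k : ℝ) ≤ (Dstar.card : ℝ) * (1 + Real.log ((Δ : ℝ) + 1)) := by
  classical
  set γ := Dstar.card with hγdef
  have hγ1 : 1 ≤ γ := Finset.card_pos.mpr hne
  set N : V → Finset V := fun w => insert w (G.neighborFinset w) with hN
  have hNdef : ∀ w, insert w (G.neighborFinset w) = N w := fun _ => rfl
  -- covering lemma: Dstar covers any set A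
  have hcover : ∀ A : Finset V, A.card ≤ ∑ u ∈ Dstar, (N u ∩ A).card := by
    intro A
    have hsub : A ⊆ Dstar.biUnion (fun u => N u ∩ A) := by
      intro x hx
      rcases hdom x with hx' | ⟨u, hu, hadj⟩
      · exact Finset.mem_biUnion.2 ⟨x, hx',
          Finset.mem_inter.2 ⟨Finset.mem_insert_self _ _, hx⟩⟩
      · exact Finset.mem_biUnion.2 ⟨u, hu, Finset.mem_inter.2
          ⟨Finset.mem_insert_of_mem ((G.mem_neighborFinset u x).2 hadj), hx⟩⟩
    exact (Finset.card_le_card hsub).trans Finset.card_biUnion_le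
  -- n ≤ γ(Δ+1)
  have hcardN : ∀ u : V, (N u).card = G.degree u + 1 := by
    intro u
    rw [hN]
    simp [Finset.card_insert_of_notMem (G.notMem_neighborFinset_self u)]
  have hn2 : Fintype.card V ≤ γ * (Δ + 1) := by
    have h1 := hcover Finset.univ
    have h2 : ∑ u ∈ Dstar, (N u ∩ Finset.univ).card ≤ γ * (Δ + 1) := by
      have : ∀ u ∈ Dstar, (N u ∩ Finset.univ).card ≤ Δ + 1 := by
        intro u _
        rw [Finset.inter_univ, hcardN u]
        exact Nat.add_le_add_right (hΔ u) 1
      calc ∑ u ∈ Dstar, (N u ∩ Finset.univ).card ≤ ∑ _u ∈ Dstar, (Δ + 1) :=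
            Finset.sum_le_sum this
        _ = γ * (Δ + 1) := by rw [Finset.sum_const, smul_eq_mul]
    rw [← Finset.card_univ]
    exact h1.trans h2
  -- step identity
  have hstep : ∀ i < k, (U (i+1)).card + (N (v i) ∩ U i).card = (U i).card := by
    intro i hi
    rw [hUsucc i hi, hNdef, Finset.inter_comm]
    have := Finset.card_sdiff_add_card_inter (U i) (N (v i))
    omega
  -- key inequality
  have hkey : ∀ i < k, γ * (U (i+1)).card + (U i).card ≤ γ * (U i).card := by
    intro i hi
    have h1 : (U i).card ≤ γ * (N (v i) ∩ U i).card := by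
      have h2 : ∑ u ∈ Dstar, (N u ∩ U i).card ≤ γ * (N (v i) ∩ U i).card := by
        calc ∑ u ∈ Dstar, (N u ∩ U i).card
            ≤ ∑ _u ∈ Dstar, (N (v i) ∩ U i).card :=
              Finset.sum_le_sum (fun u _ => hmax i hi u)
          _ = γ * (N (v i) ∩ U i).card := by rw [Finset.sum_const, smul_eq_mul]
      exact (hcover (U i)).trans h2
    have h3 := hstep i hi
    calc γ * (U (i+1)).card + (U i).card
        ≤ γ * (U (i+1)).card + γ * (N (v i) ∩ U i).card := by omega
      _ = γ * (U i).card := by rw [← Nat.mul_add, h3]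
  -- geometric decay
  have hgeom : ∀ i ≤ k, (U i).card * γ ^ i ≤ Fintype.card V * (γ - 1) ^ i := by
    intro i
    induction i with
    | zero => simp [hU0]
    | succ i ih =>
      intro hik
      have hi : i < k := by omega
      have h1 := hkey i hi
      have h2 : γ * (U (i+1)).card ≤ (γ - 1) * (U i).card := by
        have : (γ - 1) * (U i).card = γ * (U i).card - (U i).card := by
          rw [Nat.sub_mul, Nat.one_mul]
        omega
      calc (U (i+1)).card * γ ^ (i+1) = (γ * (U (i+1)).card) * γ ^ i := by ring
        _ ≤ ((γ - 1) * (U i).card) * γ ^ i := Nat.mul_le_mul_right _ h2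
        _ = (γ - 1) * ((U i).card * γ ^ i) := by ring
        _ ≤ (γ - 1) * (Fintype.card V * (γ - 1) ^ i) :=
            Nat.mul_le_mul_left _ (ih (by omega))
        _ = Fintype.card V * (γ - 1) ^ (i+1) := by ring
  -- linear lower bound
  have hlinaux : ∀ m : ℕ, ∀ i : ℕ, i + m = k → m ≤ (U i).card := by
    intro m
    induction m with
    | zero => intro i _; omega
    | succ m ih =>
      intro i h
      have hik : i < k := by omega
      have h2 := hstep i hik
      have h3 := hpos i hik
      rw [hNdef] at h3
      have h4 := ih (i+1) (by omega)
      omega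
  -- positivity facts in ℝ
  have hγR : (1:ℝ) ≤ (γ:ℝ) := by exact_mod_cast hγ1
  have hlogpos : 0 ≤ Real.log ((Δ:ℝ) + 1) := Real.log_nonneg (by
    have : (0:ℝ) ≤ (Δ:ℝ) := Nat.cast_nonneg Δ
    linarith)
  by_cases hk : k ≤ γ
  · calc (k:ℝ) ≤ (γ:ℝ) := by exact_mod_cast hk
      _ ≤ (γ:ℝ) * (1 + Real.log ((Δ:ℝ) + 1)) := by nlinarith
  · push_neg at hk
    set i := k - γ with hidef
    have hi1 : 1 ≤ i := by omega
    have hik : i ≤ k := by omega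
    have h5 : γ ≤ (U i).card := hlinaux γ i (by omega)
    have h6 := hgeom i hik
    have h7 : γ * γ ^ i ≤ γ * ((Δ + 1) * (γ - 1) ^ i) := by
      calc γ * γ ^ i ≤ (U i).card * γ ^ i := Nat.mul_le_mul_right _ h5
        _ ≤ Fintype.card V * (γ - 1) ^ i := h6
        _ ≤ (γ * (Δ + 1)) * (γ - 1) ^ i := Nat.mul_le_mul_right _ hn2
        _ = γ * ((Δ + 1) * (γ - 1) ^ i) := by ring
    have h8 : γ ^ i ≤ (Δ + 1) * (γ - 1) ^ i :=
      Nat.le_of_mul_le_mul_left h7 (by omega)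
    -- move to ℝ
    have h9 : (γ:ℝ) ^ i ≤ ((Δ:ℝ) + 1) * ((γ:ℝ) - 1) ^ i := by
      have := h8
      have hc : ((γ - 1 : ℕ) : ℝ) = (γ:ℝ) - 1 := by
        push_cast [Nat.cast_sub hγ1]; ring
      exact_mod_cast this
    have hγpos : (0:ℝ) < (γ:ℝ) := by linarith
    have h10 : (γ:ℝ) - 1 ≤ (γ:ℝ) * Real.exp (-(1/(γ:ℝ))) := by
      have h := Real.add_one_le_exp (-(1/(γ:ℝ)))
      have h' : 1 - 1/(γ:ℝ) ≤ Real.exp (-(1/(γ:ℝ))) := by linarith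
      have := mul_le_mul_of_nonneg_left h' (le_of_lt hγpos)
      have hg : (γ:ℝ) * (1 - 1/(γ:ℝ)) = (γ:ℝ) - 1 := by
        field_simp
      linarith [hg ▸ this]
    have h11 : ((γ:ℝ) - 1) ^ i ≤ ((γ:ℝ) * Real.exp (-(1/(γ:ℝ)))) ^ i :=
      pow_le_pow_left₀ (by linarith) h10 i
    have h12 : (γ:ℝ) ^ i ≤ ((Δ:ℝ) + 1) * ((γ:ℝ) ^ i * Real.exp ((i:ℝ) * (-(1/(γ:ℝ))))) := by
      have hexp : Real.exp (-(1/(γ:ℝ))) ^ i = Real.exp ((i:ℝ) * (-(1/(γ:ℝ)))) := by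
        rw [← Real.exp_nat_mul]
      calc (γ:ℝ) ^ i ≤ ((Δ:ℝ) + 1) * ((γ:ℝ) - 1) ^ i := h9
        _ ≤ ((Δ:ℝ) + 1) * ((γ:ℝ) * Real.exp (-(1/(γ:ℝ)))) ^ i := by
            apply mul_le_mul_of_nonneg_left h11 (by positivity)
        _ = ((Δ:ℝ) + 1) * ((γ:ℝ) ^ i * Real.exp ((i:ℝ) * (-(1/(γ:ℝ))))) := by
            rw [mul_pow, hexp]
    have hpowpos : (0:ℝ) < (γ:ℝ) ^ i := pow_pos hγpos i
    have h13 : 1 ≤ ((Δ:ℝ) + 1) * Real.exp (-((i:ℝ)/(γ:ℝ))) := by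
      have h' : (γ:ℝ) ^ i * 1 ≤ (γ:ℝ) ^ i * (((Δ:ℝ) + 1) * Real.exp ((i:ℝ) * (-(1/(γ:ℝ))))) := by
        ring_nf
        ring_nf at h12
        linarith
      have := le_of_mul_le_mul_left h' hpowpos
      have heq : (i:ℝ) * (-(1/(γ:ℝ))) = -((i:ℝ)/(γ:ℝ)) := by field_simp
      rw [heq] at this
      linarith
    have h14 : Real.exp ((i:ℝ)/(γ:ℝ)) ≤ (Δ:ℝ) + 1 := by
      have := mul_le_mul_of_nonneg_right h13 (le_of_lt (Real.exp_pos ((i:ℝ)/(γ:ℝ))))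
      rw [one_mul, mul_assoc, ← Real.exp_add] at this
      simpa using this
    have h15 : (i:ℝ)/(γ:ℝ) ≤ Real.log ((Δ:ℝ) + 1) := by
      have := Real.log_le_log (Real.exp_pos _) h14
      rwa [Real.log_exp] at this
    have h16 : (i:ℝ) ≤ (γ:ℝ) * Real.log ((Δ:ℝ) + 1) := by
      rw [div_le_iff₀ hγpos] at h15
      linarith [h15]
    have hki : (k:ℝ) = (i:ℝ) + (γ:ℝ) := by
      have : k = i + γ := by omega
      exact_mod_cast this
    rw [hki]
    nlinarith
end
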